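/- Let N ≥ 1 and let f_max(v) = (4N/√(2πv))·e^{−v/2}·Q(√v)·(1 − 4(Q(√v))²)^{N−1} for v > 0. Then as v → 0⁺, v^{−(N−2)/2}·f_max(v) → (N/2)·(4/√(2π))^N. (Behavior of the pdf of the maximum of N i.i.d. variables with density f₂ near the origin.) -/

import Mathlib

open Real MeasureTheory Filter Set

noncomputable def gaussQ (x : ℝ) : ℝ :=
  ∫ t in Set.Ioi x, (1 / Real.sqrt (2 * Real.pi)) * Real.exp (-t ^ 2 / 2)

noncomputable def fmax (N : ℕ) (v : ℝ) : ℝ :=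
  (4 * N / Real.sqrt (2 * Real.pi * v)) * Real.exp (-v / 2) * gaussQ (Real.sqrt v) *
    (1 - 4 * (gaussQ (Real.sqrt v)) ^ 2) ^ (N - 1)

noncomputable def phi (t : ℝ) : ℝ := (1 / Real.sqrt (2 * Real.pi)) * Real.exp (-t ^ 2 / 2)

lemma phi_int : Integrable phi := by
  have h : Integrable (fun t : ℝ => Real.exp (-(1/2 : ℝ) * t ^ 2)) :=
    integrable_exp_neg_mul_sq (by norm_num)
  have := h.const_mul (1 / Real.sqrt (2 * Real.pi))
  convert this using 2 with t
  unfold phi; ring_nf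

lemma gaussQ_zero : gaussQ 0 = 1 / 2 := by
  have h : (∫ t in Set.Ioi (0:ℝ), Real.exp (-(1/2:ℝ) * t ^ 2)) = Real.sqrt (π / (1/2)) / 2 :=
    integral_gaussian_Ioi (1/2)
  have h2 : gaussQ 0 = (1 / Real.sqrt (2 * Real.pi)) * ∫ t in Set.Ioi (0:ℝ), Real.exp (-(1/2:ℝ) * t ^ 2) := by
    rw [gaussQ, ← integral_const_mul]
    congr 1 with t; ring_nf
  rw [h2, h]
  have : π / (1/2) = 2 * π := by ring
  rw [this]
  have hpos : (0:ℝ) < Real.sqrt (2 * π) := Real.sqrt_pos.mpr (by positivity)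
  field_simp

lemma gaussQ_eq (x : ℝ) (hx : 0 ≤ x) :
    gaussQ x = 1 / 2 - ∫ t in (0:ℝ)..x, phi t := by
  have hunion : Set.Ioc 0 x ∪ Set.Ioi x = Set.Ioi (0:ℝ) := Set.Ioc_union_Ioi_eq_Ioi hx
  have hsplit : (∫ t in Set.Ioi (0:ℝ), phi t) =
      (∫ t in Set.Ioc 0 x, phi t) + ∫ t in Set.Ioi x, phi t := by
    rw [← hunion, setIntegral_union (Set.Ioc_disjoint_Ioi le_rfl) measurableSet_Ioi
      phi_int.integrableOn phi_int.integrableOn]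
  have h0 : (∫ t in Set.Ioi (0:ℝ), phi t) = 1/2 := gaussQ_zero
  have hQ : gaussQ x = ∫ t in Set.Ioi x, phi t := rfl
  rw [hQ, intervalIntegral.integral_of_le hx]
  linarith [hsplit, h0]

lemma phi_cont : Continuous phi := by
  unfold phi; fun_prop

lemma F_deriv : HasDerivAt (fun x => ∫ t in (0:ℝ)..x, phi t) (phi 0) 0 := by
  exact intervalIntegral.integral_hasDerivAt_right phi_int.intervalIntegrable
    phi_cont.aestronglyMeasurable.stronglyMeasurableAtFilter phi_cont.continuousAt

lemma sqrt_tendsto : Tendsto Real.sqrt (nhdsWithin 0 (Set.Ioi 0)) (nhdsWithin 0 (Set.Ioi 0)) := by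
  apply tendsto_nhdsWithin_of_tendsto_nhds_of_eventually_within
  · have : Tendsto Real.sqrt (nhds 0) (nhds (Real.sqrt 0)) := Real.continuous_sqrt.tendsto 0
    simpa using this.mono_left nhdsWithin_le_nhds
  · filter_upwards [self_mem_nhdsWithin] with v hv
    exact Real.sqrt_pos.mpr hv

lemma Q_tendsto : Tendsto (fun x => gaussQ x) (nhdsWithin 0 (Set.Ioi 0)) (nhds (1/2)) := by
  have hF : Tendsto (fun x => (1:ℝ)/2 - ∫ t in (0:ℝ)..x, phi t) (nhds 0) (nhds (1/2)) := by
    have := (F_deriv.continuousAt).tendsto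
    have h2 : Tendsto (fun x => ∫ t in (0:ℝ)..x, phi t) (nhds 0) (nhds 0) := by
      simpa using this
    simpa using (tendsto_const_nhds (x := (1:ℝ)/2)).sub h2
  refine (hF.mono_left nhdsWithin_le_nhds).congr' ?_
  filter_upwards [self_mem_nhdsWithin] with x hx
  exact (gaussQ_eq x (le_of_lt hx)).symm

lemma slope_tendsto :
    Tendsto (fun x => (∫ t in (0:ℝ)..x, phi t) / x) (nhdsWithin 0 (Set.Ioi 0)) (nhds (phi 0)) := by
  have := hasDerivAt_iff_tendsto_slope.mp F_deriv
  have h2 := this.mono_left (nhdsWithin_mono 0 (by intro x hx; exact ne_of_gt hx : Set.Ioi 0 ⊆ {(0:ℝ)}ᶜ))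
  refine h2.congr' ?_
  filter_upwards [self_mem_nhdsWithin] with x hx
  simp [slope, intervalIntegral.integral_same, div_eq_inv_mul]

theorem fmax_asymptotic_at_zero (N : ℕ) (hN : 1 ≤ N) :
    Tendsto (fun v : ℝ => v ^ (-(((N : ℝ) - 2) / 2)) * fmax N v)
      (nhdsWithin 0 (Set.Ioi 0))
      (nhds ((N / 2 : ℝ) * (4 / Real.sqrt (2 * Real.pi)) ^ N)) := by
  set sp := Real.sqrt (2 * Real.pi) with hsp
  have hsppos : (0:ℝ) < sp := Real.sqrt_pos.mpr (by positivity)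
  -- limit of g v = (1 - 4 Q(√v)^2)/√v
  have hQs : Tendsto (fun v => gaussQ (Real.sqrt v)) (nhdsWithin 0 (Set.Ioi 0)) (nhds (1/2)) :=
    Q_tendsto.comp sqrt_tendsto
  have hFs : Tendsto (fun v => (∫ t in (0:ℝ)..(Real.sqrt v), phi t) / Real.sqrt v)
      (nhdsWithin 0 (Set.Ioi 0)) (nhds (phi 0)) := slope_tendsto.comp sqrt_tendsto
  have hg : Tendsto (fun v => (1 - 4 * (gaussQ (Real.sqrt v)) ^ 2) / Real.sqrt v)
      (nhdsWithin 0 (Set.Ioi 0)) (nhds (4 / sp)) := by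
    have heq : ∀ᶠ v in nhdsWithin 0 (Set.Ioi 0),
        (1 - 4 * (gaussQ (Real.sqrt v)) ^ 2) / Real.sqrt v =
        2 * ((∫ t in (0:ℝ)..(Real.sqrt v), phi t) / Real.sqrt v)
          * (1 + 2 * gaussQ (Real.sqrt v)) := by
      filter_upwards [self_mem_nhdsWithin] with v hv
      have hs : (0:ℝ) < Real.sqrt v := Real.sqrt_pos.mpr hv
      have hq := gaussQ_eq (Real.sqrt v) hs.le
      have : 1 - 4 * (gaussQ (Real.sqrt v)) ^ 2 =
          2 * (∫ t in (0:ℝ)..(Real.sqrt v), phi t) * (1 + 2 * gaussQ (Real.sqrt v)) := by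
        rw [hq]; ring
      rw [this]; field_simp
    have hlim : Tendsto (fun v => 2 * ((∫ t in (0:ℝ)..(Real.sqrt v), phi t) / Real.sqrt v)
          * (1 + 2 * gaussQ (Real.sqrt v))) (nhdsWithin 0 (Set.Ioi 0))
        (nhds (2 * phi 0 * (1 + 2 * (1/2)))) :=
      ((tendsto_const_nhds.mul hFs).mul ((tendsto_const_nhds).add
        (tendsto_const_nhds.mul hQs)))
    have hphi0 : phi 0 = 1 / sp := by
      rw [hsp]; unfold phi; norm_num
    have hval : 2 * phi 0 * (1 + 2 * (1/2:ℝ)) = 4 / sp := by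
      rw [hphi0]; field_simp; ring
    rw [← hval]
    exact hlim.congr' (heq.mono fun v h => h.symm)
  -- main limit
  have hexp : Tendsto (fun v : ℝ => Real.exp (-v / 2)) (nhdsWithin 0 (Set.Ioi 0)) (nhds 1) := by
    have : Continuous (fun v : ℝ => Real.exp (-v / 2)) := by fun_prop
    have := (this.tendsto 0).mono_left (nhdsWithin_le_nhds (s := Set.Ioi 0))
    simpa using this
  have hmain : Tendsto (fun v => (4 * N / sp) * Real.exp (-v / 2) * gaussQ (Real.sqrt v) *
      ((1 - 4 * (gaussQ (Real.sqrt v)) ^ 2) / Real.sqrt v) ^ (N - 1))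
      (nhdsWithin 0 (Set.Ioi 0))
      (nhds ((4 * N / sp) * 1 * (1/2) * (4 / sp) ^ (N - 1))) :=
    ((((tendsto_const_nhds.mul hexp).mul hQs)).mul (hg.pow (N-1)))
  have hval : (4 * (N:ℝ) / sp) * 1 * (1/2) * (4 / sp) ^ (N - 1)
      = (N / 2 : ℝ) * (4 / sp) ^ N := by
    have : (4:ℝ) * N / sp * 1 * (1/2) * (4/sp)^(N-1) = (N/2) * ((4/sp) * (4/sp)^(N-1)) := by
      field_simp
    have hN1 : N - 1 + 1 = N := by omega
    rw [this, ← pow_succ', hN1]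
  rw [← hval]
  refine hmain.congr' ?_
  filter_upwards [self_mem_nhdsWithin] with v hv
  have hs : (0:ℝ) < Real.sqrt v := Real.sqrt_pos.mpr hv
  have hsv : Real.sqrt (2 * Real.pi * v) = sp * Real.sqrt v := by
    rw [hsp, ← Real.sqrt_mul (by positivity)]
  have key : v ^ (-(((N : ℝ) - 2) / 2)) = Real.sqrt v / (Real.sqrt v) ^ (N - 1) := by
    set s := Real.sqrt v with hsdef
    have hvsq : v = s ^ 2 := (Real.sq_sqrt hv.le).symm
    have h1 : v ^ (-(((N : ℝ) - 2) / 2)) = s ^ (((2 : ℤ) - N : ℤ) : ℝ) := by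
      rw [hvsq, ← Real.rpow_natCast s 2, ← Real.rpow_mul hs.le]
      congr 1
      push_cast
      ring
    rw [h1, Real.rpow_intCast]
    have h2 : s / s ^ (N - 1) = s ^ (1 : ℤ) / s ^ ((N - 1 : ℕ) : ℤ) := by
      simp [zpow_natCast]
    rw [h2, ← zpow_sub₀ hs.ne']
    congr 1
    have : ((N - 1 : ℕ) : ℤ) = (N : ℤ) - 1 := by omega
    rw [this]; ring
  symm
  show v ^ (-(((N : ℝ) - 2) / 2)) * fmax N v = _
  rw [fmax, hsv, key, div_pow]
  have hpow : (Real.sqrt v) ^ (N - 1) ≠ 0 := pow_ne_zero _ hs.ne'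
  field_simp
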